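/- The map that inserts a new minimum element in the second position (i.e. sends τ of length n−1 to π of length n with π(2)=1, π(1)=τ(1)+1, and π(i+1)=τ(i)+1 for i ≥ 2) is a bijection between 231-avoiding permutations of length n−1 and 231-avoiding permutations π of length n satisfying π(1) > π(2) and π(2) < π(3), for n ≥ 3. -/

import Mathlib

def Avoids231 {n : ℕ} (π : Fin n → Fin n) : Prop :=
  ¬ ∃ i j k : Fin n, i < j ∧ j < k ∧ π k < π i ∧ π i < π j

/-- Insert a new minimum element in second position:
π(1) = τ(1) + 1, π(2) = 1 and π(i+1) = τ(i) + 1 for i ≥ 2. -/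
def insertMinSecond {n : ℕ} (τ : Fin (n + 1) → Fin (n + 1)) :
    Fin (n + 2) → Fin (n + 2) :=
  fun i => Fin.cases ((τ 0).succ) (fun j => if j = 0 then 0 else (τ j).succ) i

namespace InsertMinAux

variable {n : ℕ}

def emb (i : Fin (n + 1)) : Fin (n + 2) :=
  if i = 0 then 0 else i.succ

lemma emb_strictMono : StrictMono (emb (n := n)) := by
  intro i j hij
  have hj : j ≠ 0 := (lt_of_le_of_lt (Fin.zero_le i) hij).ne'
  unfold emb
  rw [if_neg hj]
  split
  · exact Fin.succ_pos j
  · exact Fin.succ_lt_succ_iff.mpr hij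

lemma apply_emb (τ : Fin (n + 1) → Fin (n + 1)) (i : Fin (n + 1)) :
    insertMinSecond τ (emb i) = (τ i).succ := by
  rcases eq_or_ne i 0 with h | h
  · subst h; simp [emb, insertMinSecond]
  · simp [emb, insertMinSecond, h]

lemma apply_one (τ : Fin (n + 1) → Fin (n + 1)) :
    insertMinSecond τ ⟨1, Nat.succ_lt_succ n.succ_pos⟩ = 0 := by
  show insertMinSecond τ (Fin.succ 0) = 0
  unfold insertMinSecond
  rw [Fin.cases_succ]
  simp

lemma exists_emb (m : Fin (n + 2)) (hm : m ≠ ⟨1, Nat.succ_lt_succ n.succ_pos⟩) :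
    ∃ i, emb i = m := by
  rcases m with ⟨v, hv⟩
  rcases v with _ | _ | v
  · exact ⟨0, by simp [emb]⟩
  · exact absurd rfl hm
  · refine ⟨⟨v + 1, by omega⟩, ?_⟩
    rw [emb, if_neg (by simp [Fin.ext_iff])]
    rfl

lemma avoids_insert {τ : Fin (n + 1) → Fin (n + 1)} (h : Avoids231 τ) :
    Avoids231 (insertMinSecond τ) := by
  have h1lt : 1 < n + 2 := Nat.succ_lt_succ n.succ_pos
  rintro ⟨i, j, k, hij, hjk, hki, hij2⟩
  have hi : i ≠ ⟨1, h1lt⟩ := by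
    rintro rfl; rw [apply_one] at hki; exact absurd hki (Fin.not_lt_zero _)
  have hjj : j ≠ ⟨1, h1lt⟩ := by
    rintro rfl; rw [apply_one] at hij2; exact absurd hij2 (Fin.not_lt_zero _)
  have hk : k ≠ ⟨1, h1lt⟩ := by
    rintro rfl
    have h1 : (i : ℕ) < (j : ℕ) := hij
    have h2 : (j : ℕ) < 1 := hjk
    omega
  obtain ⟨i', rfl⟩ := exists_emb i hi
  obtain ⟨j', rfl⟩ := exists_emb j hjj
  obtain ⟨k', rfl⟩ := exists_emb k hk
  simp only [apply_emb] at hki hij2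
  exact h ⟨i', j', k', emb_strictMono.lt_iff_lt.mp hij, emb_strictMono.lt_iff_lt.mp hjk,
    Fin.succ_lt_succ_iff.mp hki, Fin.succ_lt_succ_iff.mp hij2⟩

lemma insert_injective {τ : Fin (n + 1) → Fin (n + 1)} (h : Function.Injective τ) :
    Function.Injective (insertMinSecond τ) := by
  have h1lt : 1 < n + 2 := Nat.succ_lt_succ n.succ_pos
  intro a b hab
  rcases eq_or_ne a ⟨1, h1lt⟩ with ha | ha <;>
    rcases eq_or_ne b ⟨1, h1lt⟩ with hb | hb
  · rw [ha, hb]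
  · subst ha
    obtain ⟨b', rfl⟩ := exists_emb b hb
    rw [apply_one, apply_emb] at hab
    exact absurd hab.symm (Fin.succ_ne_zero _)
  · subst hb
    obtain ⟨a', rfl⟩ := exists_emb a ha
    rw [apply_one, apply_emb] at hab
    exact absurd hab (Fin.succ_ne_zero _)
  · obtain ⟨a', rfl⟩ := exists_emb a ha
    obtain ⟨b', rfl⟩ := exists_emb b hb
    rw [apply_emb, apply_emb] at hab
    exact congrArg emb (h (Fin.succ_injective _ hab))

end InsertMinAux

open InsertMinAux in
theorem insertMinSecond_bijOn (n : ℕ) (hn : 1 ≤ n) :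
    Set.BijOn insertMinSecond
      {τ : Fin (n + 1) → Fin (n + 1) | Function.Bijective τ ∧ Avoids231 τ}
      {π : Fin (n + 2) → Fin (n + 2) | Function.Bijective π ∧ Avoids231 π ∧
        π ⟨1, by omega⟩ < π ⟨0, by omega⟩ ∧ π ⟨1, by omega⟩ < π ⟨2, by omega⟩} := by
  have h1lt : 1 < n + 2 := Nat.succ_lt_succ n.succ_pos
  have h0lt : 0 < n + 2 := Nat.succ_pos _
  have h2lt : 2 < n + 2 := by omega
  refine ⟨?_, ?_, ?_⟩
  · -- MapsTo
    rintro τ ⟨hbij, hav⟩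
    refine ⟨(Finite.injective_iff_bijective).mp (insert_injective hbij.1),
      avoids_insert hav, ?_, ?_⟩
    · rw [apply_one]
      have h0 : (⟨0, h0lt⟩ : Fin (n + 2)) = emb 0 := by simp [emb]
      rw [show (⟨0, by omega⟩ : Fin (n + 2)) = emb 0 from h0, apply_emb]
      exact Fin.succ_pos _
    · rw [apply_one]
      have h2 : (⟨2, h2lt⟩ : Fin (n + 2)) = emb ⟨1, by omega⟩ := by
        rw [emb, if_neg (by simp [Fin.ext_iff])]; rfl
      rw [show (⟨2, by omega⟩ : Fin (n + 2)) = emb ⟨1, by omega⟩ from h2, apply_emb]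
      exact Fin.succ_pos _
  · -- InjOn
    intro τ _ τ' _ h
    funext i
    have hi := congrFun h (emb i)
    rw [apply_emb, apply_emb] at hi
    exact Fin.succ_injective _ hi
  · -- SurjOn
    rintro σ ⟨hbij, hav, h10, h12⟩
    have h1 : σ ⟨1, h1lt⟩ = 0 := by
      by_contra h1
      obtain ⟨m, hm⟩ := hbij.2 0
      have hm1 : m ≠ ⟨1, h1lt⟩ := by rintro rfl; exact h1 hm
      have hm0 : m ≠ ⟨0, h0lt⟩ := by
        rintro rfl; rw [hm] at h10; exact Fin.not_lt_zero _ h10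
      have hm2 : m ≠ ⟨2, h2lt⟩ := by
        rintro rfl; rw [hm] at h12; exact Fin.not_lt_zero _ h12
      have h3 : 3 ≤ m.val := by
        rcases m with ⟨v, hv⟩
        have e0 : v ≠ 0 := fun h => hm0 (Fin.ext h)
        have e1 : v ≠ 1 := fun h => hm1 (Fin.ext h)
        have e2 : v ≠ 2 := fun h => hm2 (Fin.ext h)
        show 3 ≤ v
        omega
      exact hav ⟨⟨1, h1lt⟩, ⟨2, h2lt⟩, m,
        by simp [Fin.lt_def], by simp [Fin.lt_def]; omega,
        by rw [hm]; exact Fin.pos_of_ne_zero h1, h12⟩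
    have hpos : ∀ i : Fin (n + 1), 0 < (σ (emb i)).val := by
      intro i
      have hne : emb i ≠ ⟨1, h1lt⟩ := by
        rcases eq_or_ne i 0 with h | h
        · subst h; simp [emb, Fin.ext_iff]
        · rw [emb, if_neg h]
          intro hc
          apply h
          have hv := congrArg Fin.val hc
          simp [Fin.succ] at hv
          exact hv
      have hne0 : σ (emb i) ≠ 0 := fun h0 => hne (hbij.1 (h0.trans h1.symm))
      exact Nat.pos_of_ne_zero (fun hv => hne0 (Fin.ext hv))
    set τ : Fin (n + 1) → Fin (n + 1) :=
      fun i => ⟨(σ (emb i)).val - 1, by have := (σ (emb i)).isLt; have := hpos i; omega⟩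
      with hτ
    have hvals : ∀ i, (τ i).succ = σ (emb i) := by
      intro i
      apply Fin.ext
      have := hpos i
      simp [hτ, Fin.succ]
      omega
    have heq : insertMinSecond τ = σ := by
      funext m
      rcases eq_or_ne m ⟨1, h1lt⟩ with rfl | hm
      · rw [apply_one, h1]
      · obtain ⟨i, rfl⟩ := exists_emb m hm
        rw [apply_emb, hvals]
    have hinj : Function.Injective τ := by
      intro a b hab
      have hs : σ (emb a) = σ (emb b) := by rw [← hvals, ← hvals, hab]
      exact emb_strictMono.injective (hbij.1 hs)
    have hav' : Avoids231 τ := by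
      rintro ⟨i, j, k, hij, hjk, hki, hij2⟩
      exact hav ⟨emb i, emb j, emb k, emb_strictMono hij, emb_strictMono hjk,
        by rw [← hvals, ← hvals]; exact Fin.succ_lt_succ_iff.mpr hki,
        by rw [← hvals, ← hvals]; exact Fin.succ_lt_succ_iff.mpr hij2⟩
    exact ⟨τ, ⟨(Finite.injective_iff_bijective).mp hinj, hav'⟩, heq⟩
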